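/- arXiv:2306.08538 — 2 statements merged into one kernel-verified Lean document; each statement's English description precedes it below -/
import Mathlib

section
/- Using the HoneyBadger recursion with base cases x^0 * r^j = r^j, the dynamic-programming computation defined by P(k, j) = r^(k+j) + (x - r) * sum_{i=0}^{k-1} P(k-i-1, i+j) satisfies P(k, j) = x^k * r^j for all natural numbers k, j. -/
/-- Dynamic-programming computation from the HoneyBadger recursion:
any `P` with `P 0 j = r^j` and
`P (k+1) j = r^(k+1+j) + (x - r) * ∑_{i=0}^{k} P (k-i) (i+j)`
satisfies `P k j = x^k * r^j`. -/
theorem stmt_4 {R : Type*} [CommRing R] (x r : R) (P : ℕ → ℕ → R)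
    (hP0 : ∀ j, P 0 j = r ^ j)
    (hPrec : ∀ k j, P (k + 1) j =
      r ^ (k + 1 + j) + (x - r) * ∑ i ∈ Finset.range (k + 1), P (k - i) (i + j)) :
    ∀ k j, P k j = x ^ k * r ^ j := by
  intro k
  induction k using Nat.strong_induction_on with
  | _ k ih =>
    intro j
    match k with
    | 0 => simpa using hP0 j
    | k + 1 =>
      rw [hPrec k j]
      have hs : ∀ i ∈ Finset.range (k + 1), P (k - i) (i + j)
          = r ^ i * x ^ (k + 1 - 1 - i) * r ^ j := by
        intro i hi
        rw [show k + 1 - 1 - i = k - i from rfl,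
          ih (k - i) (by omega) (i + j), pow_add]
        ring
      rw [Finset.sum_congr rfl hs, ← Finset.sum_mul]
      have key := Commute.geom_sum₂_mul (Commute.all r x) (k + 1)
      rw [pow_add]
      linear_combination (-r ^ j) * key
end

section
/- Given the scaling identity P'_i = x^i * 2^p for each i from 1 to n (with P'_1 = x * 2^p), the final output y = α_0 * 2^p + sum_{i=1}^{n} α_i * P'_i equals (sum_{i=0}^{n} α_i * x^i) * 2^p; that is, Algorithm 2 outputs the fixed-point encoding of the polynomial evaluated at x. -/
/-- Given the scaling identities `P'_i = x^i * 2^p`, the output of Algorithm 2 is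
the fixed-point encoding of the polynomial evaluated at `x`. -/
theorem stmt_8 (x : ℝ) (p n : ℕ) (α : ℕ → ℝ) (P' : ℕ → ℝ)
    (hP' : ∀ i ∈ Finset.Icc 1 n, P' i = x ^ i * 2 ^ p) :
    α 0 * 2 ^ p + ∑ i ∈ Finset.Icc 1 n, α i * P' i =
      (∑ i ∈ Finset.range (n + 1), α i * x ^ i) * 2 ^ p := by
  rw [Finset.sum_congr rfl fun i hi => by rw [hP' i hi],
    Finset.sum_mul, Finset.range_eq_Ico,
    show Finset.Ico 0 (n+1) = insert 0 (Finset.Icc 1 n) by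
      ext i; simp; omega,
    Finset.sum_insert (by simp)]
  ring_nf
  congr 1
  exact Finset.sum_congr rfl fun i hi => by ring
end
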